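/- Let X = {p} ⊔ Σ₂ where Σ₂ = {0,1}^ℤ is the two-sided full shift, and let T fix p and act as the left shift on Σ₂. Let f : X → ℝ with f(p) = 10 and f ≡ 0 on Σ₂, and set ℰ(μ) = ∫ f dμ. For the open cover 𝒰 = { {p} ∪ [0], {p} ∪ [1] } (cylinders [0],[1] in Σ₂), the quantity p³_n(T,ℰ;𝒰) = ∑_{B ∈ 𝒰_0^{n-1}} sup_{x∈B} e^{nℰ(Δ_x^n)} equals 2^n · e^{10n}, so limsup_n (1/n) log p³_n(T,ℰ;𝒰) = log 2 + 10, which strictly exceeds P(T,ℰ) = 10. -/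

import Mathlib

open MeasureTheory Filter Set
open scoped ENNReal Classical

/-- The space `X = {p} ⊔ Σ₂` with `Σ₂ = {0,1}^ℤ` the two-sided full shift space. -/
abbrev X19 : Type := Unit ⊕ (ℤ → Bool)

noncomputable instance : MeasurableSpace X19 := ⊤

/-- `T` fixes the point `p = inl ()` and acts as the left shift on `Σ₂`. -/
def T19 : X19 → X19 := Sum.map id fun u k => u (k + 1)

/-- `f(p) = 10` and `f ≡ 0` on `Σ₂`. -/
noncomputable def f19 : X19 → ℝ := Sum.elim (fun _ => 10) fun _ => 0

/-- The (linear) energy `ℰ(μ) = ∫ f dμ`. -/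
noncomputable def E19 (μ : Measure X19) : ℝ := ∫ x, f19 x ∂μ

/-- Empirical measure `Δ_x^n`. -/
noncomputable def emp19 (n : ℕ) (x : X19) : Measure X19 :=
  (n : ℝ≥0∞)⁻¹ • ∑ i ∈ Finset.range n, Measure.dirac (T19^[i] x)

/-- The cylinder `[b] ⊆ Σ₂`, viewed inside `X`. -/
def cyl19 (b : Bool) : Set X19 := {z | ∃ u : ℤ → Bool, z = Sum.inr u ∧ u 0 = b}

/-- The element `{p} ∪ [b]` of the cover `𝒰`. -/
def U19 (b : Bool) : Set X19 := {Sum.inl ()} ∪ cyl19 b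

/-- The open cover `𝒰 = { {p} ∪ [0], {p} ∪ [1] }`. -/
noncomputable def cover19 : Finset (Set X19) := {U19 false, U19 true}

/-- The join `𝒰_0^{n-1} = ⋁_{i=0}^{n-1} T^{-i}𝒰`. -/
noncomputable def join19 (n : ℕ) : Finset (Set X19) :=
  (Fintype.piFinset fun _ : Fin n => cover19).image fun u =>
    ⋂ i : Fin n, T19^[(i : ℕ)] ⁻¹' u i

/-- `p³_n(T,ℰ;𝒰)`: infimum over finite subcovers `β` of `𝒰_0^{n-1}` of
`∑_{B∈β} sup_{x∈B} e^{nℰ(Δ_x^n)}`. -/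
noncomputable def p3_19 (n : ℕ) : ℝ :=
  sInf {r | ∃ β : Finset (Set X19), β ⊆ join19 n ∧ ⋃₀ (β : Set (Set X19)) = univ ∧
    r = ∑ B ∈ β, sSup ((fun x => Real.exp (n * E19 (emp19 n x))) '' B)}

/-- `(n,ε)`-separated sets with respect to a distance function `d`. -/
def sep19 (d : X19 → X19 → ℝ) (n : ℕ) (ε : ℝ) (E : Finset X19) : Prop :=
  ∀ x ∈ E, ∀ y ∈ E, x ≠ y → ∃ i < n, ε ≤ d (T19^[i] x) (T19^[i] y)

/-- `P_n(T,ℰ,ε)`. -/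
noncomputable def Pn19 (d : X19 → X19 → ℝ) (n : ℕ) (ε : ℝ) : ℝ :=
  sSup {r | ∃ E : Finset X19, sep19 d n ε E ∧
    r = ∑ x ∈ E, Real.exp (n * E19 (emp19 n x))}

/-- The nonlinear topological pressure `P(T,ℰ) = lim_{ε→0} limsup_n (1/n) log P_n`,
realized as the supremum over `ε > 0` of the (monotone in `ε`) limsups. -/
noncomputable def PT19 (d : X19 → X19 → ℝ) : ℝ :=
  sSup {r | ∃ ε : ℝ, 0 < ε ∧
    r = Filter.atTop.limsup fun n => Real.log (Pn19 d n ε) / n}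

instance : MeasurableSingletonClass X19 :=
  ⟨fun _ => MeasurableSpace.measurableSet_top⟩

lemma T19_iter_inl (i : ℕ) : T19^[i] (Sum.inl ()) = Sum.inl () := by
  induction i with
  | zero => rfl
  | succ k ih => rw [Function.iterate_succ_apply', ih]; rfl

lemma T19_iter_inr (i : ℕ) (u : ℤ → Bool) :
    T19^[i] (Sum.inr u) = Sum.inr (fun k => u (k + i)) := by
  induction i generalizing u with
  | zero => simp
  | succ k ih =>
      rw [Function.iterate_succ_apply]
      show T19^[k] (Sum.inr fun j => u (j+1)) = _
      rw [ih]
      congr 1; funext k'; congr 1; push_cast; ring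

lemma f19_eq : f19 = Set.indicator {Sum.inl ()} (fun _ => (10:ℝ)) := by
  funext x
  cases x with
  | inl u => simp [f19, Set.indicator]
  | inr u => simp [f19, Set.indicator]

lemma E19_eq (μ : Measure X19) : E19 μ = (μ {Sum.inl ()}).toReal * 10 := by
  rw [E19, f19_eq, integral_indicator_const _ MeasurableSpace.measurableSet_top,
    smul_eq_mul]
  rfl

lemma emp19_apply (n : ℕ) (x : X19) (s : Set X19) :
    emp19 n x s = (n : ℝ≥0∞)⁻¹ * ∑ i ∈ Finset.range n, s.indicator 1 (T19^[i] x) := by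
  rw [emp19, Measure.smul_apply, smul_eq_mul]
  congr 1
  rw [Measure.finset_sum_apply]
  exact Finset.sum_congr rfl fun i _ => Measure.dirac_apply _ _

lemma E19_emp_inl {n : ℕ} (hn : 1 ≤ n) : E19 (emp19 n (Sum.inl ())) = 10 := by
  rw [E19_eq, emp19_apply]
  have h1 : ∀ i ∈ Finset.range n,
      ({Sum.inl ()} : Set X19).indicator (1 : X19 → ℝ≥0∞) (T19^[i] (Sum.inl ())) = 1 := by
    intro i _; rw [T19_iter_inl]; simp
  have hn0 : (n : ℝ≥0∞) ≠ 0 := by exact_mod_cast Nat.cast_ne_zero.mpr (by omega)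
  rw [Finset.sum_congr rfl h1, Finset.sum_const, Finset.card_range, nsmul_eq_mul, mul_one,
    ENNReal.inv_mul_cancel hn0 (by simp)]
  simp

lemma E19_emp_inr (n : ℕ) (u : ℤ → Bool) : E19 (emp19 n (Sum.inr u)) = 0 := by
  rw [E19_eq, emp19_apply]
  have h1 : ∀ i ∈ Finset.range n,
      ({Sum.inl ()} : Set X19).indicator (1 : X19 → ℝ≥0∞) (T19^[i] (Sum.inr u)) = 0 := by
    intro i _; rw [T19_iter_inr]; simp
  rw [show (∑ i ∈ Finset.range n, ({Sum.inl ()} : Set X19).indicator (1 : X19 → ℝ≥0∞) (T19^[i] (Sum.inr u))) = 0 from Finset.sum_eq_zero h1]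
  simp

lemma inl_mem_U19 (b : Bool) : Sum.inl () ∈ U19 b := Or.inl rfl

lemma inr_mem_U19 {w : ℤ → Bool} {b : Bool} : Sum.inr w ∈ U19 b ↔ w 0 = b := by
  constructor
  · rintro (h | ⟨u, hu, h0⟩)
    · exact absurd h (by simp)
    · obtain rfl : w = u := by injection hu
      exact h0
  · intro h; exact Or.inr ⟨w, rfl, h⟩

def V19 (n : ℕ) (b : Fin n → Bool) : Set X19 := ⋂ i : Fin n, T19^[(i : ℕ)] ⁻¹' U19 (b i)

lemma inl_mem_V19 (n : ℕ) (b : Fin n → Bool) : Sum.inl () ∈ V19 n b := by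
  refine Set.mem_iInter.2 fun i => Set.mem_preimage.2 ?_
  rw [T19_iter_inl]; exact inl_mem_U19 _

lemma inr_mem_V19 {n : ℕ} {v : ℤ → Bool} {b : Fin n → Bool} :
    Sum.inr v ∈ V19 n b ↔ ∀ i : Fin n, v (i : ℕ) = b i := by
  rw [V19, Set.mem_iInter]
  apply forall_congr'
  intro i
  rw [Set.mem_preimage, T19_iter_inr, inr_mem_U19, zero_add]

noncomputable def seq19 (n : ℕ) (b : Fin n → Bool) : ℤ → Bool := fun k =>
  if h : 0 ≤ k ∧ k < n then b ⟨k.toNat, by omega⟩ else false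

lemma seq19_spec (n : ℕ) (b : Fin n → Bool) (i : Fin n) : seq19 n b ((i : ℕ) : ℤ) = b i := by
  have h : (0 : ℤ) ≤ (i:ℕ) ∧ ((i:ℕ) : ℤ) < n := ⟨Int.ofNat_nonneg _, by exact_mod_cast i.2⟩
  simp only [seq19, dif_pos h]
  congr 1

lemma seq19_mem (n : ℕ) (b : Fin n → Bool) : Sum.inr (seq19 n b) ∈ V19 n b :=
  inr_mem_V19.2 fun i => seq19_spec n b i

lemma V19_inj (n : ℕ) : Function.Injective (V19 n) := by
  intro b b' h
  have := h ▸ seq19_mem n b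
  funext i
  rw [← seq19_spec n b i]
  exact inr_mem_V19.1 this i

lemma U19_ne : U19 false ≠ U19 true := by
  intro h
  have h1 : Sum.inr (fun _ => false) ∈ U19 false := inr_mem_U19.2 rfl
  rw [h] at h1
  exact absurd (inr_mem_U19.1 h1) (by simp)

lemma join19_eq (n : ℕ) : join19 n = Finset.univ.image (V19 n) := by
  ext B
  simp only [join19, Finset.mem_image, Fintype.mem_piFinset, Finset.mem_univ, true_and]
  constructor
  · rintro ⟨u, hu, rfl⟩
    have hb : ∀ i, ∃ c : Bool, u i = U19 c := by
      intro i
      have := hu i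
      simp only [cover19, Finset.mem_insert, Finset.mem_singleton] at this
      rcases this with h | h
      · exact ⟨false, h⟩
      · exact ⟨true, h⟩
    choose b hb using hb
    refine ⟨b, ?_⟩
    rw [V19]
    exact (Set.iInter_congr fun i => by rw [hb i]).symm
  · rintro ⟨b, rfl⟩
    refine ⟨fun i => U19 (b i), fun i => ?_, rfl⟩
    dsimp only
    cases b i <;> simp [cover19]

lemma join19_covers (n : ℕ) : ⋃₀ ((join19 n : Finset (Set X19)) : Set (Set X19)) = univ := by
  apply Set.eq_univ_of_forall
  intro x
  cases x with
  | inl u =>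
      refine ⟨V19 n (fun _ => false), ?_, by cases u; exact inl_mem_V19 n _⟩
      rw [join19_eq]
      exact Finset.mem_coe.2 (Finset.mem_image_of_mem _ (Finset.mem_univ _))
  | inr v =>
      refine ⟨V19 n (fun i => v (i:ℕ)), ?_, inr_mem_V19.2 fun i => rfl⟩
      rw [join19_eq]
      exact Finset.mem_coe.2 (Finset.mem_image_of_mem _ (Finset.mem_univ _))

lemma subcover_eq {n : ℕ} {β : Finset (Set X19)} (hsub : β ⊆ join19 n)
    (hcov : ⋃₀ (β : Set (Set X19)) = univ) : β = join19 n := by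
  apply Finset.Subset.antisymm hsub
  intro B hB
  rw [join19_eq, Finset.mem_image] at hB
  obtain ⟨b, -, rfl⟩ := hB
  have hx : Sum.inr (seq19 n b) ∈ ⋃₀ (β : Set (Set X19)) := hcov ▸ Set.mem_univ _
  obtain ⟨C, hC, hxC⟩ := hx
  have hC' : C ∈ join19 n := hsub hC
  rw [join19_eq, Finset.mem_image] at hC'
  obtain ⟨b', -, rfl⟩ := hC'
  have hbb : b' = b := by
    funext i
    rw [← seq19_spec n b i]
    exact (inr_mem_V19.1 hxC i).symm
  rwa [hbb] at hC

lemma sSup_g_V19 {n : ℕ} (hn : 1 ≤ n) (b : Fin n → Bool) :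
    sSup ((fun x => Real.exp (n * E19 (emp19 n x))) '' V19 n b) = Real.exp (10 * n) := by
  apply IsGreatest.csSup_eq
  constructor
  · exact ⟨Sum.inl (), inl_mem_V19 n b, by dsimp only; rw [E19_emp_inl hn, mul_comm]⟩
  · rintro y ⟨x, hx, rfl⟩
    dsimp only
    cases x with
    | inl u => cases u; rw [E19_emp_inl hn, mul_comm]
    | inr v =>
        rw [E19_emp_inr, mul_zero]
        apply Real.exp_le_exp.2
        positivity

lemma p3_19_eq {n : ℕ} (hn : 1 ≤ n) : p3_19 n = 2 ^ n * Real.exp (10 * n) := by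
  have hval : ∀ β : Finset (Set X19), β ⊆ join19 n → ⋃₀ (β : Set (Set X19)) = univ →
      (∑ B ∈ β, sSup ((fun x => Real.exp (n * E19 (emp19 n x))) '' B))
        = 2 ^ n * Real.exp (10 * n) := by
    intro β hsub hcov
    rw [subcover_eq hsub hcov, join19_eq,
      Finset.sum_image (fun x _ y _ h => V19_inj n h)]
    have : ∀ b ∈ (Finset.univ : Finset (Fin n → Bool)),
        sSup ((fun x => Real.exp (n * E19 (emp19 n x))) '' V19 n b) = Real.exp (10 * n) :=
      fun b _ => sSup_g_V19 hn b
    rw [Finset.sum_congr rfl this, Finset.sum_const, Finset.card_univ, Fintype.card_fun,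
      nsmul_eq_mul]
    push_cast
    simp
  have hset : {r | ∃ β : Finset (Set X19), β ⊆ join19 n ∧ ⋃₀ (β : Set (Set X19)) = univ ∧
      r = ∑ B ∈ β, sSup ((fun x => Real.exp (n * E19 (emp19 n x))) '' B)}
      = {2 ^ n * Real.exp (10 * n)} := by
    ext r
    simp only [Set.mem_setOf_eq, Set.mem_singleton_iff]
    constructor
    · rintro ⟨β, hsub, hcov, rfl⟩
      exact hval β hsub hcov
    · rintro rfl
      exact ⟨join19 n, Finset.Subset.refl _, join19_covers n,
        (hval _ (Finset.Subset.refl _) (join19_covers n)).symm⟩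
  rw [p3_19, hset, csInf_singleton]

lemma isOpen_U19 (b : Bool) : IsOpen (U19 b) := by
  rw [isOpen_sum_iff]
  constructor
  · have : Sum.inl ⁻¹' (U19 b) = (univ : Set Unit) := by
      apply Set.eq_univ_of_forall; intro u; cases u; exact inl_mem_U19 b
    rw [this]; exact isOpen_univ
  · have : (Sum.inr ⁻¹' (U19 b) : Set (ℤ → Bool)) = (fun u : ℤ → Bool => u 0) ⁻¹' {b} := by
      ext u
      simp only [Set.mem_preimage, Set.mem_singleton_iff]
      exact inr_mem_U19
    rw [this]
    exact (continuous_apply (0:ℤ)).isOpen_preimage _ (isOpen_discrete _)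

lemma U19_union : U19 false ∪ U19 true = univ := by
  apply Set.eq_univ_of_forall
  intro x
  cases x with
  | inl u => cases u; exact Or.inl (inl_mem_U19 false)
  | inr v =>
      cases hv : v 0
      · exact Or.inl (inr_mem_U19.2 hv)
      · exact Or.inr (inr_mem_U19.2 hv)

lemma limsup_p3 : (Filter.atTop.limsup fun n => Real.log (p3_19 n) / n) = Real.log 2 + 10 := by
  have h : ∀ᶠ n : ℕ in atTop, Real.log (p3_19 n) / n = Real.log 2 + 10 := by
    filter_upwards [Filter.eventually_ge_atTop 1] with n hn
    have hn' : (0:ℝ) < n := by exact_mod_cast hn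
    rw [p3_19_eq hn, Real.log_mul (by positivity) (Real.exp_pos _).ne',
      Real.log_pow, Real.log_exp]
    field_simp
  rw [Filter.limsup_congr h, Filter.limsup_const]

lemma window19 (m : MetricSpace X19)
    (hcompat : m.toPseudoMetricSpace.toUniformSpace.toTopologicalSpace =
      (inferInstance : TopologicalSpace X19))
    {ε : ℝ} (hε : 0 < ε) :
    ∃ M : ℕ, ∀ u v : ℤ → Bool, (∀ k : ℤ, |k| ≤ (M:ℤ) → u k = v k) →
      @dist X19 m.toPseudoMetricSpace.toDist (Sum.inr u) (Sum.inr v) < ε := by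
  set D : (ℤ → Bool) × (ℤ → Bool) → ℝ :=
    fun p => @dist X19 m.toPseudoMetricSpace.toDist (Sum.inr p.1) (Sum.inr p.2) with hD
  have hDc : Continuous D := by
    have h1 := @continuous_dist X19 m.toPseudoMetricSpace
    rw [hcompat] at h1
    exact h1.comp (continuous_inr.prodMap continuous_inr)
  set K : Set ((ℤ → Bool) × (ℤ → Bool)) := D ⁻¹' Set.Ici ε with hK
  have hKc : IsCompact K := (isClosed_Ici.preimage hDc).isCompact
  set W : ℤ → Set ((ℤ → Bool) × (ℤ → Bool)) := fun k => {q | q.1 k ≠ q.2 k} with hW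
  have hWo : ∀ k, IsOpen (W k) := by
    intro k
    have : W k = (fun q : (ℤ → Bool) × (ℤ → Bool) => (q.1 k, q.2 k)) ⁻¹'
        {p : Bool × Bool | p.1 ≠ p.2} := rfl
    rw [this]
    exact (((continuous_apply k).comp continuous_fst).prodMk
      ((continuous_apply k).comp continuous_snd)).isOpen_preimage _ (isOpen_discrete _)
  have hcov : K ⊆ ⋃ k, W k := by
    intro q hq
    have hεD : ε ≤ D q := hq
    have hne : q.1 ≠ q.2 := by
      intro h
      rw [hD] at hεD
      simp only [h] at hεD
      rw [dist_self] at hεD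
      linarith
    obtain ⟨k, hk⟩ := Function.ne_iff.1 hne
    exact Set.mem_iUnion.2 ⟨k, hk⟩
  obtain ⟨t, ht⟩ := hKc.elim_finite_subcover W hWo hcov
  refine ⟨t.sup fun k => k.natAbs, fun u v hagree => ?_⟩
  by_contra hlt
  push_neg at hlt
  have hmem : (u, v) ∈ K := hlt
  obtain ⟨k, hkt, hk⟩ := Set.mem_iUnion₂.1 (ht hmem)
  have hle : |k| ≤ ((t.sup fun k => k.natAbs : ℕ) : ℤ) := by
    have h2 := Finset.le_sup (f := fun k : ℤ => k.natAbs) hkt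
    rw [Int.abs_eq_natAbs]
    exact_mod_cast h2
  exact hk (hagree k hle)

lemma sum_le_of_sep (m : MetricSpace X19) {ε : ℝ} (M : ℕ)
    (hM : ∀ u v : ℤ → Bool, (∀ k : ℤ, |k| ≤ (M:ℤ) → u k = v k) →
      @dist X19 m.toPseudoMetricSpace.toDist (Sum.inr u) (Sum.inr v) < ε)
    {n : ℕ} (hn : 1 ≤ n) {E : Finset X19}
    (hE : sep19 (fun a b => @dist X19 m.toPseudoMetricSpace.toDist a b) n ε E) :
    (∑ x ∈ E, Real.exp (n * E19 (emp19 n x))) ≤ Real.exp (10 * n) + 2 ^ (2 * M + n) := by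
  classical
  set g : X19 → ℝ := fun x => Real.exp (n * E19 (emp19 n x)) with hg
  set W : Finset ℤ := Finset.Icc (-(M:ℤ)) ((M:ℤ) + n - 1) with hWdef
  rw [← Finset.sum_filter_add_sum_filter_not E (fun x => x.isLeft)]
  have hleft : (∑ x ∈ E.filter (fun x => x.isLeft), g x) ≤ Real.exp (10 * n) := by
    have hsub : E.filter (fun x => x.isLeft) ⊆ {Sum.inl ()} := by
      intro x hx
      rcases Finset.mem_filter.1 hx with ⟨-, hx2⟩
      cases x with
      | inl u => cases u; exact Finset.mem_singleton_self _
      | inr v => simp at hx2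
    calc (∑ x ∈ E.filter (fun x => x.isLeft), g x)
        ≤ ∑ x ∈ ({Sum.inl ()} : Finset X19), g x :=
          Finset.sum_le_sum_of_subset_of_nonneg hsub (fun i _ _ => (Real.exp_pos _).le)
      _ = Real.exp (10 * n) := by
          rw [Finset.sum_singleton, hg]; dsimp only; rw [E19_emp_inl hn, mul_comm]
  have hright : (∑ x ∈ E.filter (fun x => ¬ x.isLeft), g x) ≤ 2 ^ (2 * M + n) := by
    have hval : ∀ x ∈ E.filter (fun x => ¬ x.isLeft), g x = 1 := by
      intro x hx
      rcases Finset.mem_filter.1 hx with ⟨-, hx2⟩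
      cases x with
      | inl u => simp at hx2
      | inr v => rw [hg]; dsimp only; rw [E19_emp_inr, mul_zero, Real.exp_zero]
    rw [Finset.sum_congr rfl hval, Finset.sum_const, nsmul_eq_mul, mul_one]
    have hWcard : W.card = 2 * M + n := by
      rw [hWdef, Int.card_Icc]; omega
    set ρ : X19 → ({k // k ∈ W} → Bool) :=
      fun x => Sum.elim (fun _ _ => false) (fun u k => u k.1) x with hρ
    have hinj : Set.InjOn ρ (E.filter (fun x => ¬ x.isLeft)) := by
      intro x hx y hy hxy
      rcases Finset.mem_filter.1 hx with ⟨hxE, hx2⟩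
      rcases Finset.mem_filter.1 hy with ⟨hyE, hy2⟩
      cases x with
      | inl u => simp at hx2
      | inr u =>
        cases y with
        | inl w => simp at hy2
        | inr v =>
          by_contra hne
          obtain ⟨i, hi, hsep⟩ := hE _ hxE _ hyE hne
          rw [T19_iter_inr, T19_iter_inr] at hsep
          have hag : ∀ k : ℤ, |k| ≤ (M:ℤ) → u (k + i) = v (k + i) := by
            intro k hk
            have h1 := abs_le.1 hk
            have hmem : (k + (i:ℤ)) ∈ W := by
              rw [hWdef, Finset.mem_Icc]
              constructor <;> omega
            exact congrFun hxy ⟨k + i, hmem⟩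
          exact absurd hsep (not_le.2 (hM _ _ hag))
    have hcard := Finset.card_le_card_of_injOn ρ
      (fun a _ => Finset.mem_univ (ρ a)) hinj
    rw [Finset.card_univ, Fintype.card_fun, Fintype.card_coe, hWcard] at hcard
    calc ((E.filter (fun x => ¬ x.isLeft)).card : ℝ)
        ≤ ((2 ^ (2 * M + n) : ℕ) : ℝ) := by exact_mod_cast hcard
      _ = 2 ^ (2 * M + n) := by push_cast; ring
  linarith

lemma limsup_Pn19 (m : MetricSpace X19)
    (hcompat : m.toPseudoMetricSpace.toUniformSpace.toTopologicalSpace =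
      (inferInstance : TopologicalSpace X19))
    {ε : ℝ} (hε : 0 < ε) :
    (Filter.atTop.limsup fun n =>
      Real.log (Pn19 (fun a b => @dist X19 m.toPseudoMetricSpace.toDist a b) n ε) / n) = 10 := by
  obtain ⟨M, hM⟩ := window19 m hcompat hε
  set d := fun a b => @dist X19 m.toPseudoMetricSpace.toDist a b with hd
  have hbounds : ∀ n : ℕ, 1 ≤ n →
      Real.exp (10 * n) ≤ Pn19 d n ε ∧
      Pn19 d n ε ≤ Real.exp (10 * n) + 2 ^ (2 * M + n) := by
    intro n hn
    set S := {r | ∃ E : Finset X19, sep19 d n ε E ∧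
      r = ∑ x ∈ E, Real.exp (n * E19 (emp19 n x))} with hS
    have hub : ∀ r ∈ S, r ≤ Real.exp (10 * n) + 2 ^ (2 * M + n) := by
      rintro r ⟨E, hE, rfl⟩
      exact sum_le_of_sep m M hM hn hE
    have hmem : Real.exp (10 * n) ∈ S := by
      refine ⟨{Sum.inl ()}, ?_, ?_⟩
      · intro x hx y hy hne
        rw [Finset.mem_singleton] at hx hy
        exact absurd (hx.trans hy.symm) hne
      · rw [Finset.sum_singleton, E19_emp_inl hn, mul_comm]
    exact ⟨le_csSup ⟨_, hub⟩ hmem, csSup_le ⟨_, hmem⟩ hub⟩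
  have hlog2 : Real.log 2 ≤ 1 := by
    have := Real.log_le_sub_one_of_pos (by norm_num : (0:ℝ) < 2)
    linarith
  have hlog2' : 0 ≤ Real.log 2 := Real.log_nonneg (by norm_num)
  have hev : ∀ᶠ n : ℕ in atTop,
      (10 : ℝ) ≤ Real.log (Pn19 d n ε) / n ∧
      Real.log (Pn19 d n ε) / n ≤ Real.log 2 / n + 10 := by
    filter_upwards [Filter.eventually_ge_atTop (max 1 (2 * M))] with n hn
    have hn1 : 1 ≤ n := le_trans (le_max_left _ _) hn
    have hn2M : 2 * M ≤ n := le_trans (le_max_right _ _) hn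
    have hn' : (0:ℝ) < n := by exact_mod_cast hn1
    obtain ⟨h1, h2⟩ := hbounds n hn1
    have hP0 : 0 < Pn19 d n ε := lt_of_lt_of_le (Real.exp_pos _) h1
    have hpow : (2:ℝ) ^ (2 * M + n) ≤ Real.exp (10 * n) := by
      have he : (2:ℝ) ^ (2 * M + n) = Real.exp (((2 * M + n : ℕ) : ℝ) * Real.log 2) := by
        rw [← Real.log_pow, Real.exp_log (by positivity)]
      rw [he]
      apply Real.exp_le_exp.2
      have hc : ((2 * M + n : ℕ) : ℝ) ≤ 2 * n := by
        push_cast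
        have : (2 * M : ℝ) ≤ n := by exact_mod_cast hn2M
        linarith
      have ha := mul_le_mul_of_nonneg_right hc hlog2'
      have hb := mul_le_mul_of_nonneg_left hlog2 (by positivity : (0:ℝ) ≤ 2 * n)
      linarith
    have h2' : Pn19 d n ε ≤ 2 * Real.exp (10 * n) := by linarith
    constructor
    · rw [le_div_iff₀ hn']
      have := (Real.le_log_iff_exp_le hP0).2 h1
      linarith [this]
    · have hlogle : Real.log (Pn19 d n ε) ≤ Real.log 2 + 10 * n := by
        calc Real.log (Pn19 d n ε) ≤ Real.log (2 * Real.exp (10 * n)) :=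
              Real.log_le_log hP0 h2'
          _ = Real.log 2 + 10 * n := by
              rw [Real.log_mul (by norm_num) (Real.exp_pos _).ne', Real.log_exp]
      rw [div_le_iff₀ hn']
      calc Real.log (Pn19 d n ε) ≤ Real.log 2 + 10 * n := hlogle
        _ ≤ (Real.log 2 / n + 10) * n := by
            rw [add_mul, div_mul_cancel₀ _ hn'.ne']
  have htend : Tendsto (fun n : ℕ => Real.log (Pn19 d n ε) / n) atTop (nhds 10) := by
    apply tendsto_of_tendsto_of_tendsto_of_le_of_le'
      (g := fun _ : ℕ => (10:ℝ)) (h := fun n : ℕ => Real.log 2 / n + 10)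
    · exact tendsto_const_nhds
    · have := (tendsto_const_div_atTop_nhds_zero_nat (Real.log 2)).add
        (tendsto_const_nhds (x := (10:ℝ)))
      simpa using this
    · exact hev.mono fun n h => h.1
    · exact hev.mono fun n h => h.2
  exact htend.limsup_eq

lemma PT19_eq (m : MetricSpace X19)
    (hcompat : m.toPseudoMetricSpace.toUniformSpace.toTopologicalSpace =
      (inferInstance : TopologicalSpace X19)) :
    PT19 (fun a b => @dist X19 m.toPseudoMetricSpace.toDist a b) = 10 := by
  have hset : {r | ∃ ε : ℝ, 0 < ε ∧
      r = Filter.atTop.limsup fun n =>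
        Real.log (Pn19 (fun a b => @dist X19 m.toPseudoMetricSpace.toDist a b) n ε) / n}
      = {(10:ℝ)} := by
    ext r
    simp only [Set.mem_setOf_eq, Set.mem_singleton_iff]
    constructor
    · rintro ⟨ε, hε, rfl⟩
      exact limsup_Pn19 m hcompat hε
    · rintro rfl
      exact ⟨1, one_pos, (limsup_Pn19 m hcompat one_pos).symm⟩
  rw [PT19, hset, csSup_singleton]


/-- for the fixed-point-plus-shift system, `𝒰` is an open cover,
`p³_n(T,ℰ;𝒰) = 2^n e^{10n}`, hence `limsup (1/n) log p³_n = log 2 + 10`, which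
strictly exceeds the nonlinear pressure `P(T,ℰ) = 10` (for any metric inducing
the topology of `X`). -/
theorem p3_exceeds_pressure (m : MetricSpace X19)
    (hcompat : m.toPseudoMetricSpace.toUniformSpace.toTopologicalSpace =
      (inferInstance : TopologicalSpace X19)) :
    (IsOpen (U19 false) ∧ IsOpen (U19 true) ∧ U19 false ∪ U19 true = univ) ∧
    (∀ n : ℕ, 1 ≤ n → p3_19 n = 2 ^ n * Real.exp (10 * n)) ∧
    (Filter.atTop.limsup fun n => Real.log (p3_19 n) / n) = Real.log 2 + 10 ∧
    PT19 (fun a b => @dist X19 m.toPseudoMetricSpace.toDist a b) = 10 ∧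
    Real.log 2 + 10 > 10 := by
  refine ⟨⟨isOpen_U19 false, isOpen_U19 true, U19_union⟩, fun n hn => p3_19_eq hn,
    limsup_p3, PT19_eq m hcompat, ?_⟩
  have hl := Real.log_pos (by norm_num : (1:ℝ) < 2)
  linarith
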